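/- If G is a connected graph with m ≥ 1 edges, then q*(G) ≤ 1 − 2/√m + 1/m. -/

import Mathlib

open Finset
open scoped Classical

variable {V : Type*} [Fintype V] [DecidableEq V]

/-- Number of edges of `G` inside vertex set `A` (as a real number). -/
noncomputable def eIn (G : SimpleGraph V) (A : Finset V) : ℝ :=
  (1/2) * ∑ u ∈ A, ∑ v ∈ A, if G.Adj u v then (1:ℝ) else 0

/-- Total number of edges of `G` (as a real number). -/
noncomputable def numEdges (G : SimpleGraph V) : ℝ := eIn G (univ : Finset V)

/-- Degree of vertex `v` in `G` (as a real number). -/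
noncomputable def degR (G : SimpleGraph V) (v : V) : ℝ :=
  ∑ u : V, if G.Adj v u then (1:ℝ) else 0

/-- Volume of vertex set `A`: sum of degrees of its vertices. -/
noncomputable def vol (G : SimpleGraph V) (A : Finset V) : ℝ := ∑ v ∈ A, degR G v

/-- Number of edges of `G` between `A` and its complement (as a real number). -/
noncomputable def eCross (G : SimpleGraph V) (A : Finset V) : ℝ :=
  ∑ u ∈ A, ∑ v ∈ (univ : Finset V) \ A, if G.Adj u v then (1:ℝ) else 0

/-- The modularity score of a vertex partition `P` of `G`. -/
noncomputable def modScore (G : SimpleGraph V) (P : Finpartition (univ : Finset V)) : ℝ :=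
  (∑ A ∈ P.parts, eIn G A) / numEdges G
    - (∑ A ∈ P.parts, (vol G A)^2) / (4 * (numEdges G)^2)

/-- The modularity of `G`: the supremum of modularity scores over all vertex partitions. -/
noncomputable def modularity (G : SimpleGraph V) : ℝ :=
  sSup { q : ℝ | ∃ P : Finpartition (univ : Finset V), q = modScore G P }

lemma aux_card_le_edges {W : Type*} [Fintype W] [DecidableEq W]
    (H : SimpleGraph W) [DecidableRel H.Adj] (h : H.Connected) :
    Fintype.card W ≤ H.edgeFinset.card + 1 := by
  obtain ⟨r⟩ := h.nonempty
  have hpar : ∀ v : W, v ≠ r → ∃ p, H.Adj v p ∧ H.dist p r < H.dist v r := by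
    intro v hv
    obtain ⟨w, hw⟩ := (h.preconnected v r).exists_walk_length_eq_dist
    cases w with
    | nil => exact absurd rfl hv
    | cons hadj w' =>
      refine ⟨_, hadj, lt_of_le_of_lt (SimpleGraph.dist_le w') ?_⟩
      rw [← hw]; simp [SimpleGraph.Walk.length_cons]
  choose p hp1 hp2 using hpar
  have hinj : Function.Injective
      (fun v : {v : W // v ≠ r} =>
        (⟨s(v.1, p v.1 v.2), (H.mem_edgeSet).2 (hp1 v.1 v.2)⟩ : H.edgeSet)) := by
    rintro ⟨a, ha⟩ ⟨b, hb⟩ hab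
    simp only [Subtype.mk.injEq, Sym2.eq_iff] at hab ⊢
    rcases hab with ⟨h1, h2⟩ | ⟨h1, h2⟩
    · exact h1
    · exfalso
      have d1 := hp2 a ha
      have d2 := hp2 b hb
      rw [h2] at d1; rw [← h1] at d2
      omega
  have hne : Nonempty W := h.nonempty
  have := Fintype.card_le_of_injective _ hinj
  have hcs : Fintype.card {v : W // v ≠ r} = Fintype.card W - 1 := by
    simp [Fintype.card_subtype_compl]
  have hpos : 0 < Fintype.card W := Fintype.card_pos
  have hEq : Fintype.card {x // x ∈ H.edgeSet} = H.edgeFinset.card := by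
    rw [SimpleGraph.edgeFinset_card]
  omega

lemma sum_over_parts (P : Finpartition (univ : Finset V)) (f : V → ℝ) :
    ∑ A ∈ P.parts, ∑ x ∈ A, f x = ∑ x, f x := by
  conv_rhs => rw [← P.biUnion_parts]
  rw [Finset.sum_biUnion P.disjoint]
  rfl

lemma cross_lower (G : SimpleGraph V) (hG : G.Connected) (P : Finpartition (univ : Finset V)) :
    2 * ((P.parts.card : ℝ) - 1) ≤ ∑ A ∈ P.parts, eCross G A := by
  haveI : Nonempty V := hG.nonempty
  set Q : SimpleGraph {A // A ∈ P.parts} :=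
    { Adj := fun A B => A ≠ B ∧ ∃ u ∈ A.1, ∃ v ∈ B.1, G.Adj u v,
      symm := ⟨by
        rintro A B ⟨hne, u, hu, v, hv, h⟩
        exact ⟨hne.symm, v, hv, u, hu, h.symm⟩⟩,
      loopless := ⟨fun A h => h.1 rfl⟩ } with hQ
  have hQadj : ∀ A B, Q.Adj A B ↔ (A.1 ≠ B.1 ∧ ∃ u ∈ A.1, ∃ v ∈ B.1, G.Adj u v) := by
    intro A B
    rw [hQ]
    constructor
    · rintro ⟨hne, h⟩; exact ⟨fun he => hne (Subtype.ext he), h⟩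
    · rintro ⟨hne, h⟩; exact ⟨fun he => hne (congrArg Subtype.val he), h⟩
  set pt : V → {A // A ∈ P.parts} := fun v => ⟨P.part v, P.part_mem.2 (mem_univ v)⟩ with hpt
  have key : ∀ u v : V, G.Walk u v → Q.Reachable (pt u) (pt v) := by
    intro u v w
    induction w with
    | nil => exact SimpleGraph.Reachable.refl _
    | @cons a b c h p ih =>
      refine SimpleGraph.Reachable.trans ?_ ih
      by_cases he : pt a = pt b
      · rw [he]
      · exact SimpleGraph.Adj.reachable
          ⟨he, a, P.mem_part (mem_univ a), b, P.mem_part (mem_univ b), h⟩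
  have hQconn : Q.Connected := by
    have hne : Nonempty {A // A ∈ P.parts} := ⟨pt (Classical.arbitrary V)⟩
    refine SimpleGraph.Connected.mk ?_
    intro A B
    obtain ⟨a, ha⟩ := P.nonempty_of_mem_parts A.2
    obtain ⟨b, hb⟩ := P.nonempty_of_mem_parts B.2
    have h1 : pt a = A := Subtype.ext (P.part_eq_of_mem A.2 ha)
    have h2 : pt b = B := Subtype.ext (P.part_eq_of_mem B.2 hb)
    obtain ⟨w⟩ := hG.preconnected a b
    rw [← h1, ← h2]
    exact key a b w
  have hcard : P.parts.card ≤ Q.edgeFinset.card + 1 := by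
    have := aux_card_le_edges Q hQconn
    rwa [Fintype.card_coe] at this
  have hdeg : ∀ A : {A // A ∈ P.parts}, (Q.degree A : ℝ) ≤ eCross G A.1 := by
    intro A
    have h1 : (Q.degree A : ℝ)
        = ∑ B ∈ P.parts, (if (A.1 ≠ B ∧ ∃ u ∈ A.1, ∃ v ∈ B, G.Adj u v) then (1:ℝ) else 0) := by
      rw [← Finset.sum_attach P.parts
        (fun B => (if (A.1 ≠ B ∧ ∃ u ∈ A.1, ∃ v ∈ B, G.Adj u v) then (1:ℝ) else 0))]
      rw [SimpleGraph.degree, SimpleGraph.neighborFinset_eq_filter, Finset.card_filter]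
      rw [← Finset.univ_eq_attach]
      push_cast
      refine Finset.sum_congr rfl fun B _ => ?_
      rw [if_congr (hQadj A B) rfl rfl]
    rw [h1]
    have h2 : ∀ B ∈ P.parts,
        (if (A.1 ≠ B ∧ ∃ u ∈ A.1, ∃ v ∈ B, G.Adj u v) then (1:ℝ) else 0)
        ≤ (if B = A.1 then 0 else ∑ u ∈ A.1, ∑ v ∈ B, if G.Adj u v then (1:ℝ) else 0) := by
      intro B _
      by_cases hBA : B = A.1
      · subst hBA
        simp
      · rw [if_neg hBA]
        split_ifs with hadj
        · obtain ⟨-, u, hu, v, hv, huv⟩ := hadj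
          calc (1:ℝ) = if G.Adj u v then (1:ℝ) else 0 := by rw [if_pos huv]
            _ ≤ ∑ v ∈ B, if G.Adj u v then (1:ℝ) else 0 := by
                refine Finset.single_le_sum (f := fun v => if G.Adj u v then (1:ℝ) else 0)
                  (fun i _ => ?_) hv
                positivity
            _ ≤ ∑ u ∈ A.1, ∑ v ∈ B, if G.Adj u v then (1:ℝ) else 0 := by
                refine Finset.single_le_sum
                  (f := fun u => ∑ v ∈ B, if G.Adj u v then (1:ℝ) else 0)
                  (fun i _ => ?_) hu
                positivity
        · positivity
    calc _ ≤ ∑ B ∈ P.parts,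
        (if B = A.1 then 0 else ∑ u ∈ A.1, ∑ v ∈ B, if G.Adj u v then (1:ℝ) else 0) :=
          Finset.sum_le_sum h2
      _ = ∑ B ∈ P.parts.erase A.1, ∑ u ∈ A.1, ∑ v ∈ B, if G.Adj u v then (1:ℝ) else 0 := by
          rw [← Finset.sum_erase (s := P.parts) (a := A.1)
            (f := fun B => if B = A.1 then (0:ℝ)
              else ∑ u ∈ A.1, ∑ v ∈ B, if G.Adj u v then (1:ℝ) else 0) (by simp)]
          exact Finset.sum_congr rfl fun B hB => if_neg (Finset.ne_of_mem_erase hB)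
      _ = ∑ u ∈ A.1, ∑ B ∈ P.parts.erase A.1, ∑ v ∈ B, if G.Adj u v then (1:ℝ) else 0 :=
          Finset.sum_comm
      _ = ∑ u ∈ A.1, ∑ v ∈ (P.parts.erase A.1).biUnion id, if G.Adj u v then (1:ℝ) else 0 := by
          refine Finset.sum_congr rfl fun u _ => ?_
          exact (Finset.sum_biUnion (P.disjoint.subset (by simp [Finset.erase_subset]))).symm
      _ ≤ eCross G A.1 := by
          refine Finset.sum_le_sum fun u _ => ?_
          refine Finset.sum_le_sum_of_subset_of_nonneg ?_ (fun i _ _ => by positivity)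
          intro v hv
          rw [Finset.mem_biUnion] at hv
          obtain ⟨B, hB, hvB⟩ := hv
          rw [Finset.mem_sdiff]
          refine ⟨mem_univ v, fun hvA => ?_⟩
          exact (Finset.ne_of_mem_erase hB)
            (P.eq_of_mem_parts (Finset.mem_of_mem_erase hB) A.2 hvB hvA)
  have hsum : ∑ A ∈ P.parts, eCross G A = ∑ A : {A // A ∈ P.parts}, eCross G A.1 := by
    rw [← Finset.sum_attach P.parts (fun A => eCross G A), Finset.univ_eq_attach]
  have hdegsum : (∑ A : {A // A ∈ P.parts}, (Q.degree A : ℝ)) = 2 * Q.edgeFinset.card := by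
    rw [← Nat.cast_sum]
    rw [SimpleGraph.sum_degrees_eq_twice_card_edges]
    push_cast
    ring
  have h3 : ((P.parts.card : ℝ) - 1) ≤ Q.edgeFinset.card := by
    have : (P.parts.card : ℝ) ≤ Q.edgeFinset.card + 1 := by exact_mod_cast hcard
    linarith
  calc 2 * ((P.parts.card : ℝ) - 1) ≤ 2 * Q.edgeFinset.card := by linarith
    _ = ∑ A : {A // A ∈ P.parts}, (Q.degree A : ℝ) := hdegsum.symm
    _ ≤ ∑ A : {A // A ∈ P.parts}, eCross G A.1 := Finset.sum_le_sum fun A _ => hdeg A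
    _ = ∑ A ∈ P.parts, eCross G A := hsum.symm

lemma modScore_le_bound (G : SimpleGraph V) (hG : G.Connected) (hm : 1 ≤ numEdges G)
    (P : Finpartition (univ : Finset V)) :
    modScore G P ≤ 1 - 2 / Real.sqrt (numEdges G) + 1 / numEdges G := by
  haveI : Nonempty V := hG.nonempty
  have hm0 : (0:ℝ) < numEdges G := lt_of_lt_of_le one_pos hm
  set m := numEdges G with hmdef
  set K := ((P.parts.card : ℕ) : ℝ) with hKdef
  have hK1 : (1:ℝ) ≤ K := by
    rw [hKdef]
    have hmem := P.part_mem.2 (mem_univ (Classical.arbitrary V))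
    have : 0 < P.parts.card := Finset.card_pos.2 ⟨_, hmem⟩
    exact_mod_cast this
  have hK0 : (0:ℝ) < K := lt_of_lt_of_le one_pos hK1
  -- volume sum
  have hvol : ∑ A ∈ P.parts, vol G A = 2 * m := by
    have h1 : ∑ A ∈ P.parts, vol G A = ∑ x, degR G x := sum_over_parts P (degR G)
    rw [h1, hmdef]
    unfold numEdges eIn degR
    ring
  -- Cauchy-Schwarz
  have hCS : (2*m)^2 ≤ K * ∑ A ∈ P.parts, (vol G A)^2 := by
    have := sq_sum_le_card_mul_sum_sq (s := P.parts) (f := vol G)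
    rwa [hvol] at this
  -- edge identity
  have hE : ∑ A ∈ P.parts, eIn G A = m - (1/2) * ∑ A ∈ P.parts, eCross G A := by
    have h2m : ∑ A ∈ P.parts, (2 * eIn G A + eCross G A) = 2 * m := by
      have h1 : ∀ A ∈ P.parts, 2 * eIn G A + eCross G A
          = ∑ u ∈ A, ∑ v, if G.Adj u v then (1:ℝ) else 0 := by
        intro A _
        unfold eIn eCross
        calc 2 * ((1/2) * ∑ u ∈ A, ∑ v ∈ A, if G.Adj u v then (1:ℝ) else 0)
              + (∑ u ∈ A, ∑ v ∈ (univ : Finset V) \ A, if G.Adj u v then (1:ℝ) else 0)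
            = ∑ u ∈ A, ((∑ v ∈ A, if G.Adj u v then (1:ℝ) else 0)
              + ∑ v ∈ (univ : Finset V) \ A, if G.Adj u v then (1:ℝ) else 0) := by
              rw [Finset.sum_add_distrib]; ring
          _ = ∑ u ∈ A, ∑ v, if G.Adj u v then (1:ℝ) else 0 := by
              refine Finset.sum_congr rfl fun u _ => ?_
              rw [add_comm]
              exact Finset.sum_sdiff (Finset.subset_univ A)
      rw [Finset.sum_congr rfl h1,
        sum_over_parts P (fun u => ∑ v, if G.Adj u v then (1:ℝ) else 0), hmdef]
      unfold numEdges eIn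
      ring
    rw [Finset.sum_add_distrib, ← Finset.mul_sum] at h2m
    linarith
  have hcross := cross_lower G hG P
  have hS1 : ∑ A ∈ P.parts, eIn G A ≤ m - (K - 1) := by
    rw [hE, hKdef]
    linarith
  have hS2 : 4 * m^2 / K ≤ ∑ A ∈ P.parts, (vol G A)^2 := by
    rw [div_le_iff₀ hK0]
    nlinarith
  -- sqrt facts
  set s := Real.sqrt m with hsdef
  have hs2 : s^2 = m := Real.sq_sqrt hm0.le
  have hs1 : (1:ℝ) ≤ s := by
    rw [hsdef]
    exact Real.one_le_sqrt.2 hm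
  have hs0 : (0:ℝ) < s := lt_of_lt_of_le one_pos hs1
  -- combine
  have t1 : (∑ A ∈ P.parts, eIn G A) / m ≤ (m - (K - 1)) / m := by gcongr
  have t2 : 1/K ≤ (∑ A ∈ P.parts, (vol G A)^2)/(4*m^2) := by
    rw [div_le_div_iff₀ hK0 (by positivity)]
    nlinarith [hCS]
  have key : (m - (K - 1))/m - 1/K ≤ 1 - 2/s + 1/m := by
    have e1 : (m - (K - 1))/m = 1 - (K-1)/m := by field_simp
    rw [e1]
    have h2s : 2/s ≤ K/m + 1/K := by
      rw [div_add_div _ _ hm0.ne' hK0.ne', div_le_div_iff₀ hs0 (by positivity)]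
      nlinarith [mul_nonneg hs0.le (sq_nonneg (K - s)), hs2]
    have e2 : (K-1)/m = K/m - 1/m := by ring
    linarith
  unfold modScore
  rw [← hmdef]
  calc (∑ A ∈ P.parts, eIn G A) / m - (∑ A ∈ P.parts, (vol G A)^2) / (4 * m^2)
      ≤ (m - (K - 1))/m - 1/K := by linarith
    _ ≤ 1 - 2/s + 1/m := key

theorem modularity_le_of_connected (G : SimpleGraph V) (hG : G.Connected)
    (hm : 1 ≤ numEdges G) :
    modularity G ≤ 1 - 2 / Real.sqrt (numEdges G) + 1 / numEdges G := by
  apply Real.sSup_le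
  · rintro q ⟨P, rfl⟩
    exact modScore_le_bound G hG hm P
  · have hm0 : (0:ℝ) < numEdges G := lt_of_lt_of_le one_pos hm
    set s := Real.sqrt (numEdges G) with hsdef
    have hs2 : s^2 = numEdges G := Real.sq_sqrt hm0.le
    have hs1 : (1:ℝ) ≤ s := Real.one_le_sqrt.2 hm
    have hs0 : (0:ℝ) < s := by linarith
    have e : 1 / numEdges G = (1/s)^2 := by
      rw [← hs2, div_pow, one_pow]
    rw [e]
    have h9 : 1 - 2/s + (1/s)^2 = (1 - 1/s)^2 := by ring
    rw [h9]
    positivity
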